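/- If the persistent excitation condition ∫_t^{t+T₁} Ψ(τ)Ψ(τ)ᵀ dτ ≥ μ·I holds for the reduced-order system e_V' = -ΨΨᵀ e_V with bounded Ψ (‖Ψ(t)‖² ≤ φ_M²), then over each interval of length T₁ the squared norm decays by a fixed factor: ‖e_V(t+T₁)‖² ≤ (1 - δ)‖e_V(t)‖² for some δ ∈ (0,1) depending only on μ, φ_M, T₁. -/

import Mathlib

open scoped RealInnerProductSpace
set_option maxHeartbeats 1000000

theorem stmt_10 (Ψ : ℝ → EuclideanSpace ℝ (Fin 2)) (e : ℝ → EuclideanSpace ℝ (Fin 2))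
    (φM T₁ μ : ℝ) (hT₁ : 0 < T₁) (hμ : 0 < μ)
    (hcont : Continuous Ψ)
    (hbound : ∀ t, 0 ≤ t → ‖Ψ t‖ ≤ φM)
    (hODE : ∀ t, 0 ≤ t → HasDerivAt e (-(⟪Ψ t, e t⟫ • Ψ t)) t)
    (hPE : ∀ t, 0 ≤ t → ∀ v : EuclideanSpace ℝ (Fin 2),
      μ * ‖v‖ ^ 2 ≤ ∫ τ in t..(t + T₁), ⟪Ψ τ, v⟫ ^ 2) :
    ∃ δ : ℝ, 0 < δ ∧ δ < 1 ∧
      ∀ t, 0 ≤ t → ‖e (t + T₁)‖ ^ 2 ≤ (1 - δ) * ‖e t‖ ^ 2 := by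
  have hφ0 : 0 ≤ φM := le_trans (norm_nonneg _) (hbound 0 le_rfl)
  set h : ℝ → ℝ := fun s => ⟪Ψ s, e s⟫ with hh
  have heC : ∀ s : ℝ, 0 ≤ s → ContinuousAt e s := fun s hs => (hODE s hs).continuousAt
  have hecOn : ∀ a b : ℝ, 0 ≤ a → ContinuousOn e (Set.Icc a b) :=
    fun a b ha s hs => (heC s (ha.trans hs.1)).continuousWithinAt
  have hhOn : ∀ a b : ℝ, 0 ≤ a → ContinuousOn h (Set.Icc a b) :=
    fun a b ha => (hcont.continuousOn).inner (hecOn a b ha)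
  have hds : ∀ s : ℝ, 0 ≤ s → HasDerivAt (fun u => ‖e u‖^2) (-2 * h s^2) s := by
    intro s hs
    have h1 := HasDerivAt.inner ℝ (hODE s hs) (hODE s hs)
    have h2 : (fun t => ⟪e t, e t⟫) = fun t => ‖e t‖^2 := by
      funext u; exact real_inner_self_eq_norm_sq _
    rw [h2] at h1
    refine h1.congr_deriv ?_
    simp [hh, inner_neg_left, inner_neg_right, real_inner_smul_left, real_inner_smul_right,
      real_inner_comm (Ψ s) (e s)]
    ring
  -- μ ≤ φM² T₁
  have hμT : μ ≤ φM^2 * T₁ := by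
    have hv := hPE 0 le_rfl (EuclideanSpace.single 0 (1:ℝ))
    rw [EuclideanSpace.norm_single] at hv
    simp only [norm_one, one_pow, mul_one, zero_add] at hv
    have hle : (∫ τ in (0:ℝ)..T₁, ⟪Ψ τ, EuclideanSpace.single 0 (1:ℝ)⟫ ^ 2)
        ≤ ∫ _ in (0:ℝ)..T₁, φM^2 := by
      apply intervalIntegral.integral_mono_on hT₁.le
      · exact ((hcont.inner continuous_const).pow 2).intervalIntegrable _ _
      · exact intervalIntegrable_const
      · intro x hx
        have h1 : |⟪Ψ x, EuclideanSpace.single 0 (1:ℝ)⟫| ≤ φM := by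
          refine le_trans (abs_real_inner_le_norm _ _) ?_
          rw [EuclideanSpace.norm_single, norm_one, mul_one]
          exact hbound x hx.1
        have h2 := abs_le.mp h1
        nlinarith [h2.1, h2.2]
    rw [intervalIntegral.integral_const, smul_eq_mul, sub_zero] at hle
    linarith
  have hφne : φM ≠ 0 := by
    intro h0; rw [h0] at hμT; simp at hμT; nlinarith
  have hφpos : 0 < φM := lt_of_le_of_ne hφ0 (Ne.symm hφne)
  have hTne : T₁ ≠ 0 := hT₁.ne'
  set D : ℝ := 2 + 8 * φM^4 * T₁^2 with hD
  have hDpos : 0 < D := by positivity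
  refine ⟨μ / D, by positivity, ?_, ?_⟩
  · rw [div_lt_one hDpos, hD]
    nlinarith [sq_nonneg (φM^2 * T₁ - 1), sq_nonneg (φM^2*T₁)]
  intro t ht
  have htT : t ≤ t + T₁ := by linarith
  have hmem : ∀ s ∈ Set.uIcc t (t+T₁), (0:ℝ) ≤ s := by
    intro s hs
    rw [Set.uIcc_of_le htT] at hs
    exact ht.trans hs.1
  have huIcc : Set.uIcc t (t+T₁) = Set.Icc t (t+T₁) := Set.uIcc_of_le htT
  have hcon : ContinuousOn h (Set.Icc t (t+T₁)) := hhOn t (t+T₁) ht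
  have hh2int : IntervalIntegrable (fun s => h s^2) MeasureTheory.volume t (t+T₁) := by
    apply ContinuousOn.intervalIntegrable
    rw [huIcc]; exact hcon.pow 2
  set g : ℝ → ℝ := fun s => ⟪Ψ s, e t⟫ with hg
  have hgcont : Continuous g := hcont.inner continuous_const
  have hg2int : IntervalIntegrable (fun s => g s^2) MeasureTheory.volume t (t+T₁) :=
    (hgcont.pow 2).intervalIntegrable _ _
  set S : ℝ := ∫ s in t..t+T₁, h s^2 with hS
  set P : ℝ := ∫ s in t..t+T₁, g s^2 with hP
  have hSnn : 0 ≤ S := by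
    rw [hS]
    apply intervalIntegral.integral_nonneg htT
    intro u _; positivity
  -- FTC for ‖e‖²
  have hFTC : ∫ s in t..t+T₁, (-2 * h s^2) = ‖e (t+T₁)‖^2 - ‖e t‖^2 :=
    intervalIntegral.integral_eq_sub_of_hasDerivAt (f := fun u => ‖e u‖^2)
      (fun s hs => hds s (hmem s hs)) (hh2int.const_mul (-2))
  have hIeq : ∫ s in t..t+T₁, (-2 * h s^2) = -2*S := by
    rw [hS, ← intervalIntegral.integral_const_mul]
  have hnorm_eq : ‖e (t+T₁)‖^2 = ‖e t‖^2 - 2*S := by linarith [hFTC, hIeq]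
  set c : ℝ := 1 / (4 * φM^2 * T₁) with hc
  have hcpos : 0 < c := by positivity
  set A : ℝ := (1/c) * S + c * P with hA
  have hint2 : ∀ a b : ℝ, t ≤ a → a ≤ t+T₁ → t ≤ b → b ≤ t+T₁ →
      IntervalIntegrable (fun s => (1/c)*h s^2 + c*g s^2) MeasureTheory.volume a b := by
    intro a b h1 h2 h3 h4
    apply ContinuousOn.intervalIntegrable
    have hsub : Set.uIcc a b ⊆ Set.Icc t (t+T₁) := by
      intro s hs
      rcases Set.mem_uIcc.mp hs with ⟨ha,hb⟩|⟨ha,hb⟩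
      · exact ⟨h1.trans ha, hb.trans h4⟩
      · exact ⟨h3.trans ha, hb.trans h2⟩
    exact ((continuousOn_const.mul (hcon.pow 2)).add
      (continuousOn_const.mul ((hgcont.continuousOn).pow 2))).mono hsub
  -- key bound : ‖e τ - e t‖² ≤ A
  have hkey : ∀ τ ∈ Set.Icc t (t+T₁), ‖e τ - e t‖^2 ≤ A := by
    intro τ hτ
    have htτ : t ≤ τ := hτ.1
    have hτT : τ ≤ t + T₁ := hτ.2
    have hint1 : IntervalIntegrable (fun s => -2 * h s^2 + 2 * h s * g s)
        MeasureTheory.volume t τ := by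
      apply ContinuousOn.intervalIntegrable
      rw [Set.uIcc_of_le htτ]
      have hcon' : ContinuousOn h (Set.Icc t τ) :=
        hcon.mono (Set.Icc_subset_Icc le_rfl hτT)
      exact (continuousOn_const.mul (hcon'.pow 2)).add
        ((continuousOn_const.mul hcon').mul (hgcont.continuousOn))
    have hFTC2 : ∫ s in t..τ, (-2 * h s^2 + 2 * h s * g s) = ‖e τ - e t‖^2 - 0 := by
      have heq := intervalIntegral.integral_eq_sub_of_hasDerivAt
        (f := fun s => ‖e s - e t‖^2) (f' := fun s => -2 * h s^2 + 2 * h s * g s)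
        (a := t) (b := τ) ?_ hint1
      · simpa using heq
      · intro s hs
        rw [Set.uIcc_of_le htτ] at hs
        have hs0 : (0:ℝ) ≤ s := ht.trans hs.1
        have hd1 : HasDerivAt (fun u => e u - e t) (-(h s • Ψ s)) s :=
          (hODE s hs0).sub_const (e t)
        have h1 := HasDerivAt.inner ℝ hd1 hd1
        have h2 : (fun u => ⟪e u - e t, e u - e t⟫) = fun u => ‖e u - e t‖^2 := by
          funext u; exact real_inner_self_eq_norm_sq _
        rw [h2] at h1
        refine h1.congr_deriv ?_
        simp [hh, hg, inner_neg_left, inner_neg_right, real_inner_smul_left,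
          real_inner_smul_right, inner_sub_right, inner_sub_left,
          real_inner_comm (Ψ s) (e s), real_inner_comm (Ψ s) (e t)]
        ring
    rw [sub_zero] at hFTC2
    rw [← hFTC2]
    calc ∫ s in t..τ, (-2*h s^2 + 2*h s*g s)
        ≤ ∫ s in t..τ, ((1/c)*h s^2 + c*g s^2) := by
          apply intervalIntegral.integral_mono_on htτ hint1
            (hint2 t τ le_rfl htT htτ hτT)
          intro s _
          have key : (1/c)*(h s - c*g s)^2 = (1/c)*h s^2 - 2*h s*g s + c*g s^2 := by
            field_simp; ring
          have hnn := mul_nonneg (le_of_lt (one_div_pos.mpr hcpos)) (sq_nonneg (h s - c*g s))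
          nlinarith [sq_nonneg (h s)]
      _ ≤ ∫ s in t..t+T₁, ((1/c)*h s^2 + c*g s^2) := by
          have h12 := intervalIntegral.integral_add_adjacent_intervals
            (hint2 t τ le_rfl htT htτ hτT) (hint2 τ (t+T₁) htτ hτT htT le_rfl)
          have hnn : 0 ≤ ∫ s in τ..t+T₁, ((1/c)*h s^2 + c*g s^2) :=
            intervalIntegral.integral_nonneg hτT (fun u _ => by positivity)
          linarith
      _ = A := by
          rw [hA, hS, hP, ← intervalIntegral.integral_const_mul,
            ← intervalIntegral.integral_const_mul,
            ← intervalIntegral.integral_add (hh2int.const_mul (1/c)) (hg2int.const_mul c)]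
  -- pointwise bound on g²
  have hgval : ∀ τ ∈ Set.Icc t (t+T₁), g τ^2 ≤ 2*h τ^2 + 2*φM^2*A := by
    intro τ hτ
    have hw : |⟪Ψ τ, e τ - e t⟫| ≤ φM * ‖e τ - e t‖ :=
      le_trans (abs_real_inner_le_norm _ _)
        (mul_le_mul_of_nonneg_right (hbound τ (ht.trans hτ.1)) (norm_nonneg _))
    have h2 := abs_le.mp hw
    have hw2 : ⟪Ψ τ, e τ - e t⟫^2 ≤ (φM * ‖e τ - e t‖)^2 := sq_le_sq' h2.1 h2.2
    have hgeq : g τ = h τ - ⟪Ψ τ, e τ - e t⟫ := by simp [hg, hh, inner_sub_right]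
    have hA1 := hkey τ hτ
    rw [hgeq]
    linarith [hw2, sq_nonneg (h τ + ⟪Ψ τ, e τ - e t⟫),
      mul_le_mul_of_nonneg_left hA1 (sq_nonneg φM)]
  -- integrate
  have hPle : P ≤ 2*S + 2*φM^2*A*T₁ := by
    calc P = ∫ s in t..t+T₁, g s^2 := hP
      _ ≤ ∫ s in t..t+T₁, (2*h s^2 + 2*φM^2*A) := by
          apply intervalIntegral.integral_mono_on htT hg2int
            ((hh2int.const_mul 2).add intervalIntegrable_const)
          intro τ hτ; exact hgval τ hτ
      _ = 2*S + 2*φM^2*A*T₁ := by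
          rw [intervalIntegral.integral_add (hh2int.const_mul 2) intervalIntegrable_const,
            intervalIntegral.integral_const_mul, intervalIntegral.integral_const, smul_eq_mul,
            add_sub_cancel_left, ← hS]
          ring
  have hAc : 2*φM^2*A*T₁ = 8*φM^4*T₁^2*S + (1/2)*P := by
    rw [hA, hc]; field_simp; ring
  have hCineq : μ * ‖e t‖^2 ≤ P := hPE t ht (e t)
  clear_value S P c A
  have hPS : P ≤ 2*D*S := by
    have h1 : P ≤ 4*S + 16*(φM^4*T₁^2*S) := by linarith [hPle, hAc]
    have h2 : 2*D*S = 4*S + 16*(φM^4*T₁^2*S) := by rw [hD]; ring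
    linarith [h1, h2]
  have hgoal : μ/D * ‖e t‖^2 ≤ 2*S := by
    rw [div_mul_eq_mul_div, div_le_iff₀ hDpos]
    calc μ*‖e t‖^2 ≤ P := hCineq
      _ ≤ 2*D*S := hPS
      _ = 2*S*D := by ring
  rw [hnorm_eq]
  linarith [hgoal]
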